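/- Let f : R^p → R be convex and differentiable with M-Lipschitz continuous gradient (M > 0). Then for all x, y in R^p, (1/M)‖∇f(x) - ∇f(y)‖² ≤ ⟨∇f(x) - ∇f(y), x - y⟩. -/

import Mathlib

open scoped RealInnerProductSpace

section Aux

variable {F : Type*} [NormedAddCommGroup F] [InnerProductSpace ℝ F] [CompleteSpace F]

lemma aux_line_hasDerivAt (f : F → ℝ) (g : F → F)
    (hgrad : ∀ z, HasGradientAt f (g z) z) (x v : F) (t : ℝ) :
    HasDerivAt (fun t : ℝ => f (x + t • v)) ⟪g (x + t • v), v⟫ t := by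
  have h1 : HasDerivAt (fun t : ℝ => x + t • v) v t := by
    simpa using ((hasDerivAt_id t).smul_const v).const_add x
  have := ((hgrad (x + t • v)).hasFDerivAt).comp_hasDerivAt t h1
  simp [InnerProductSpace.toDual_apply_apply] at this
  exact this

/-- Subgradient inequality for convex differentiable functions. -/
lemma aux_subgrad (f : F → ℝ) (g : F → F)
    (hconv : ConvexOn ℝ Set.univ f)
    (hgrad : ∀ z, HasGradientAt f (g z) z) (x y : F) :
    f x + ⟪g x, y - x⟫ ≤ f y := by
  set v := y - x with hv
  set ψ : ℝ → ℝ := fun t => f (x + t • v) with hψ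
  have hψconv : ConvexOn ℝ Set.univ ψ := by
    have := hconv.comp_affineMap (AffineMap.lineMap x y : ℝ →ᵃ[ℝ] F)
    have heq : (f ∘ (AffineMap.lineMap x y : ℝ →ᵃ[ℝ] F)) = ψ := by
      funext t
      simp [ψ, AffineMap.lineMap_apply, hv, add_comm]
    rw [heq, Set.preimage_univ] at this
    exact this
  have hd : HasDerivAt ψ ⟪g (x + (0:ℝ) • v), v⟫ 0 :=
    aux_line_hasDerivAt f g hgrad x v 0
  have h01 : (0:ℝ) < 1 := one_pos
  have := hψconv.le_slope_of_hasDerivAt (Set.mem_univ 0) (Set.mem_univ 1) h01 hd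
  have hslope : slope ψ 0 1 = f y - f x := by
    simp [slope_def_field, ψ, hv]
  rw [hslope] at this
  have h0 : (x + (0:ℝ) • v) = x := by simp
  rw [h0] at this
  linarith

/-- Descent lemma: for `M`-Lipschitz gradient. -/
lemma aux_descent (f : F → ℝ) (g : F → F) (M : ℝ) (hM : 0 < M)
    (hgrad : ∀ z, HasGradientAt f (g z) z)
    (hlip : ∀ x y, ‖g x - g y‖ ≤ M * ‖x - y‖) (x y : F) :
    f y ≤ f x + ⟪g x, y - x⟫ + M / 2 * ‖y - x‖ ^ 2 := by
  set v := y - x with hv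
  set φ : ℝ → ℝ := fun t => f (x + t • v) - t * ⟪g x, v⟫ - M * t ^ 2 / 2 * ‖v‖ ^ 2
    with hφ
  have hder : ∀ t : ℝ, HasDerivAt φ
      (⟪g (x + t • v), v⟫ - ⟪g x, v⟫ - M * t * ‖v‖ ^ 2) t := by
    intro t
    have h1 := aux_line_hasDerivAt f g hgrad x v t
    have h2 : HasDerivAt (fun t : ℝ => t * ⟪g x, v⟫) ⟪g x, v⟫ t := by
      simpa using (hasDerivAt_id t).mul_const ⟪g x, v⟫
    have h3 : HasDerivAt (fun t : ℝ => M * t ^ 2 / 2 * ‖v‖ ^ 2)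
        (M * t * ‖v‖ ^ 2) t := by
      have : HasDerivAt (fun t : ℝ => t ^ 2) (2 * t) t := by
        simpa using hasDerivAt_pow 2 t
      have := ((this.const_mul M).div_const 2).mul_const (‖v‖ ^ 2)
      rw [show M * t * ‖v‖ ^ 2 = M * (2 * t) / 2 * ‖v‖ ^ 2 by ring]
      exact this
    exact (h1.sub h2).sub h3
  have hanti : AntitoneOn φ (Set.Icc 0 1) := by
    apply antitoneOn_of_deriv_nonpos (convex_Icc 0 1)
    · exact fun t _ => (hder t).continuousAt.continuousWithinAt
    · exact fun t _ => ((hder t).differentiableAt).differentiableWithinAt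
    · intro t ht
      rw [interior_Icc] at ht
      rw [(hder t).deriv]
      have hcs : ⟪g (x + t • v) - g x, v⟫ ≤ ‖g (x + t • v) - g x‖ * ‖v‖ :=
        real_inner_le_norm _ _
      have hl : ‖g (x + t • v) - g x‖ ≤ M * ‖t • v‖ := by
        have := hlip (x + t • v) x
        simpa using this
      have hnorm : ‖t • v‖ = t * ‖v‖ := by
        rw [norm_smul, Real.norm_eq_abs, abs_of_pos ht.1]
      have : ⟪g (x + t • v) - g x, v⟫ ≤ M * t * ‖v‖ ^ 2 := by
        calc ⟪g (x + t • v) - g x, v⟫ ≤ ‖g (x + t • v) - g x‖ * ‖v‖ := hcs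
          _ ≤ M * (t * ‖v‖) * ‖v‖ := by
              apply mul_le_mul_of_nonneg_right _ (norm_nonneg v)
              rw [← hnorm]; exact hl
          _ = M * t * ‖v‖ ^ 2 := by ring
      rw [inner_sub_left] at this
      linarith
  have h10 := hanti (Set.left_mem_Icc.2 zero_le_one) (Set.right_mem_Icc.2 zero_le_one)
    zero_le_one
  simp only [φ] at h10
  have h0 : (x + (0:ℝ) • v) = x := by simp
  have h1 : (x + (1:ℝ) • v) = y := by simp [hv]
  rw [h0, h1] at h10
  simp at h10
  linarith

end Aux

/-- Cocoercivity: if `f` is convex and differentiable with `M`-Lipschitz gradient `g`, then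
`(1/M)‖g x - g y‖² ≤ ⟨g x - g y, x - y⟩`. -/
theorem stmt1 (p : ℕ) (f : EuclideanSpace ℝ (Fin p) → ℝ)
    (g : EuclideanSpace ℝ (Fin p) → EuclideanSpace ℝ (Fin p))
    (M : ℝ) (hM : 0 < M)
    (hconv : ConvexOn ℝ Set.univ f)
    (hgrad : ∀ x, HasGradientAt f (g x) x)
    (hlip : ∀ x y, ‖g x - g y‖ ≤ M * ‖x - y‖) :
    ∀ x y, (1 / M) * ‖g x - g y‖ ^ 2 ≤ ⟪g x - g y, x - y⟫ := by
  -- key one-sided inequality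
  have key : ∀ x y, f x + ⟪g x, y - x⟫ + 1 / (2 * M) * ‖g y - g x‖ ^ 2 ≤ f y := by
    intro x y
    set d := g y - g x with hd
    set z := y - (1 / M) • d with hz
    have h1 : f z ≤ f y + ⟪g y, z - y⟫ + M / 2 * ‖z - y‖ ^ 2 :=
      aux_descent f g M hM hgrad hlip y z
    have h2 : f x + ⟪g x, z - x⟫ ≤ f z := aux_subgrad f g hconv hgrad x z
    have hzy : z - y = -((1 / M) • d) := by rw [hz]; abel
    have hzx : z - x = (y - x) - (1 / M) • d := by rw [hz]; abel
    rw [hzy] at h1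
    rw [hzx] at h2
    have e1 : ⟪g y, -((1 / M) • d)⟫ = -(1 / M) * ⟪g y, d⟫ := by
      rw [inner_neg_right, real_inner_smul_right]; ring
    have e2 : ‖-((1 / M) • d)‖ ^ 2 = (1 / M) ^ 2 * ‖d‖ ^ 2 := by
      rw [norm_neg, norm_smul, mul_pow, Real.norm_eq_abs, sq_abs]
    have e3 : ⟪g x, (y - x) - (1 / M) • d⟫ = ⟪g x, y - x⟫ - (1 / M) * ⟪g x, d⟫ := by
      rw [inner_sub_right, real_inner_smul_right]
    rw [e1, e2] at h1
    rw [e3] at h2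
    have e4 : ⟪g y, d⟫ - ⟪g x, d⟫ = ‖d‖ ^ 2 := by
      rw [← inner_sub_left, ← hd, real_inner_self_eq_norm_sq]
    have hMne : M ≠ 0 := ne_of_gt hM
    have : f x + ⟪g x, y - x⟫ - (1 / M) * ⟪g x, d⟫ ≤
        f y - (1 / M) * ⟪g y, d⟫ + M / 2 * ((1 / M) ^ 2 * ‖d‖ ^ 2) := by linarith
    have hsimp : M / 2 * ((1 / M) ^ 2 * ‖d‖ ^ 2) = 1 / (2 * M) * ‖d‖ ^ 2 := by
      field_simp
    rw [hsimp] at this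
    have := calc f x + ⟪g x, y - x⟫ + (1 / M) * (⟪g y, d⟫ - ⟪g x, d⟫)
        - 1 / (2 * M) * ‖d‖ ^ 2
        = (f x + ⟪g x, y - x⟫ - (1 / M) * ⟪g x, d⟫)
          + (1 / M) * ⟪g y, d⟫ - 1 / (2 * M) * ‖d‖ ^ 2 := by ring
      _ ≤ f y := by linarith
    rw [e4] at this
    have hfin : (1 / M) * ‖d‖ ^ 2 - 1 / (2 * M) * ‖d‖ ^ 2 = 1 / (2 * M) * ‖d‖ ^ 2 := by
      field_simp; ring
    linarith [this, hfin]
  intro x y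
  have h1 := key x y
  have h2 := key y x
  have e1 : ‖g y - g x‖ = ‖g x - g y‖ := norm_sub_rev _ _
  have e2 : ⟪g x, y - x⟫ + ⟪g y, x - y⟫ = -⟪g x - g y, x - y⟫ := by
    rw [inner_sub_left]
    have : (x - y : EuclideanSpace ℝ (Fin p)) = -(y - x) := by abel
    rw [this]
    simp only [inner_neg_right]
    ring
  rw [e1] at h1
  have hsum : ⟪g x, y - x⟫ + ⟪g y, x - y⟫ + 2 * (1 / (2 * M) * ‖g x - g y‖ ^ 2) ≤ 0 := by
    linarith
  rw [e2] at hsum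
  have : 2 * (1 / (2 * M) * ‖g x - g y‖ ^ 2) = (1 / M) * ‖g x - g y‖ ^ 2 := by
    field_simp
  linarith [hsum, this]
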